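/- Let m ∈ L¹([0,T], ℝ₊) and f⁰, α > 0. Suppose (f_n) is a countable family of continuous functions from [0,T] to ℝ₊ such that ‖f₀‖_∞ ≤ f⁰ and f_{n+1}(t) ≤ α(1 + ∫₀ᵗ m(s) f_n(s) ds) for all t ∈ [0,T] and all n ≥ 0. Then sup_{n ≥ 0} ‖f_n‖_∞ ≤ (α + f⁰) · exp(α ‖m‖_{L¹}). -/

import Mathlib

open MeasureTheory Set
open Filter Topology
set_option maxHeartbeats 1000000

noncomputable section

/-- **A uniform bound on families of functions satisfying recurrent integral estimates.**
If `‖f 0‖_∞ ≤ f⁰` and `f (n+1) t ≤ α (1 + ∫₀ᵗ m s * f n s ds)` for all `n` and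
`t ∈ [0,T]`, then `sup_n ‖f n‖_∞ ≤ (α + f⁰) exp (α ‖m‖_{L¹})`. -/
theorem uniform_bound_recurrent_integral_estimates
    (T : ℝ) (hT : 0 < T)
    (m : ℝ → ℝ) (hm : IntegrableOn m (Icc 0 T)) (hm0 : ∀ t, 0 ≤ m t)
    (f0 α : ℝ) (hf0 : 0 < f0) (hα : 0 < α)
    (f : ℕ → ℝ → ℝ)
    (hcont : ∀ n, ContinuousOn (f n) (Icc 0 T))
    (hnonneg : ∀ n, ∀ t ∈ Icc (0:ℝ) T, 0 ≤ f n t)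
    (hbase : ∀ t ∈ Icc (0:ℝ) T, f 0 t ≤ f0)
    (hrec : ∀ n, ∀ t ∈ Icc (0:ℝ) T,
      f (n + 1) t ≤ α * (1 + ∫ s in Ioc 0 t, m s * f n s)) :
    ∀ n, ∀ t ∈ Icc (0:ℝ) T,
      f n t ≤ (α + f0) * Real.exp (α * ∫ s in Icc (0:ℝ) T, m s) := by
  set M : ℝ → ℝ := fun t => ∫ s in Ioc (0:ℝ) t, m s with hMdef
  have hIocsub : ∀ t1 t2 : ℝ, 0 ≤ t1 → t2 ≤ T → Ioc t1 t2 ⊆ Icc (0:ℝ) T := by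
    intro t1 t2 h1 h2 s hs
    exact ⟨h1.trans hs.1.le, hs.2.trans h2⟩
  have hmIoc : ∀ t1 t2 : ℝ, 0 ≤ t1 → t2 ≤ T → IntegrableOn m (Ioc t1 t2) :=
    fun t1 t2 h1 h2 => hm.mono_set (hIocsub t1 t2 h1 h2)
  have hMadd : ∀ t ∈ Icc (0:ℝ) T, ∀ t' ∈ Icc (0:ℝ) T, t ≤ t' →
      M t' = M t + ∫ s in Ioc t t', m s := by
    intro t ht t' ht' htt'
    rw [hMdef]
    simp only
    rw [← setIntegral_union (Ioc_disjoint_Ioc_of_le le_rfl) measurableSet_Ioc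
        (hmIoc 0 t le_rfl ht.2) (hmIoc t t' ht.1 ht'.2),
      Ioc_union_Ioc_eq_Ioc ht.1 htt']
  have hMnonneg : ∀ t, 0 ≤ M t := by
    intro t
    exact setIntegral_nonneg measurableSet_Ioc (fun s _ => hm0 s)
  have hMmono : ∀ t ∈ Icc (0:ℝ) T, ∀ t' ∈ Icc (0:ℝ) T, t ≤ t' → M t ≤ M t' := by
    intro t ht t' ht' htt'
    rw [hMadd t ht t' ht' htt']
    have : (0:ℝ) ≤ ∫ s in Ioc t t', m s :=
      setIntegral_nonneg measurableSet_Ioc (fun s _ => hm0 s)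
    linarith
  have hMcont : ContinuousOn M (Icc 0 T) := intervalIntegral.continuousOn_primitive hm
  have hM0 : M 0 = 0 := by simp [hMdef]
  have hexpcont : ContinuousOn (fun s => Real.exp (α * M s)) (Icc 0 T) :=
    Real.continuous_exp.comp_continuousOn (continuousOn_const.mul hMcont)
  set g : ℝ → ℝ := fun s => m s * Real.exp (α * M s) with hgdef
  have hgIcc : IntegrableOn g (Icc 0 T) := hm.mul_continuousOn hexpcont isCompact_Icc
  have hgIoc : ∀ t1 t2 : ℝ, 0 ≤ t1 → t2 ≤ T → IntegrableOn g (Ioc t1 t2) :=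
    fun t1 t2 h1 h2 => hgIcc.mono_set (hIocsub t1 t2 h1 h2)
  set u : ℝ → ℝ := fun t => ∫ s in Ioc (0:ℝ) t, g s with hudef
  have huadd : ∀ t ∈ Icc (0:ℝ) T, ∀ t' ∈ Icc (0:ℝ) T, t ≤ t' →
      u t' = u t + ∫ s in Ioc t t', g s := by
    intro t ht t' ht' htt'
    rw [hudef]
    simp only
    rw [← setIntegral_union (Ioc_disjoint_Ioc_of_le le_rfl) measurableSet_Ioc
        (hgIoc 0 t le_rfl ht.2) (hgIoc t t' ht.1 ht'.2),
      Ioc_union_Ioc_eq_Ioc ht.1 htt']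
  have hucont : ContinuousOn u (Icc 0 T) := intervalIntegral.continuousOn_primitive hgIcc
  have hu0 : u 0 = 0 := by simp [hudef]
  -- increment bound
  have hincr : ∀ t ∈ Icc (0:ℝ) T, ∀ t' ∈ Icc (0:ℝ) T, t ≤ t' →
      (∫ s in Ioc t t', g s) ≤ Real.exp (α * M t') * (M t' - M t) := by
    intro t ht t' ht' htt'
    have h1 : (∫ s in Ioc t t', g s) ≤ ∫ s in Ioc t t', m s * Real.exp (α * M t') := by
      apply setIntegral_mono_on (hgIoc t t' ht.1 ht'.2)
        ((hmIoc t t' ht.1 ht'.2).mul_const _) measurableSet_Ioc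
      intro s hs
      have hsmem : s ∈ Icc (0:ℝ) T := hIocsub t t' ht.1 ht'.2 hs
      have : M s ≤ M t' := hMmono s hsmem t' ht' hs.2
      have := Real.exp_le_exp.2 (mul_le_mul_of_nonneg_left this hα.le)
      exact mul_le_mul_of_nonneg_left this (hm0 s)
    have h2 : (∫ s in Ioc t t', m s * Real.exp (α * M t'))
        = Real.exp (α * M t') * (M t' - M t) := by
      rw [integral_mul_const]
      have : (∫ s in Ioc t t', m s) = M t' - M t := by
        rw [hMadd t ht t' ht' htt']; ring
      rw [this]; ring
    linarith
  -- key inequality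
  have hkey : ∀ t ∈ Icc (0:ℝ) T, α * u t ≤ Real.exp (α * M t) - 1 := by
    intro t ht
    have hε : ∀ ε : ℝ, 0 < ε → α * u t ≤ Real.exp (α * (1 + ε) * M t) - 1 := by
      intro ε hεpos
      set S : Set ℝ := {x | x ∈ Icc (0:ℝ) T ∧ α * u x ≤ Real.exp (α * (1 + ε) * M x) - 1}
        with hSdef
      have hSclosed : IsClosed (S ∩ Icc 0 T) := by
        have : S ∩ Icc 0 T =
            Icc (0:ℝ) T ∩ (fun x => Real.exp (α * (1 + ε) * M x) - 1 - α * u x) ⁻¹' Ici 0 := by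
          ext x
          simp only [hSdef, mem_inter_iff, mem_setOf_eq, mem_preimage, mem_Ici]
          constructor
          · rintro ⟨⟨hx1, hx2⟩, _⟩; exact ⟨hx1, by linarith⟩
          · rintro ⟨hx1, hx2⟩; exact ⟨⟨hx1, by linarith⟩, hx1⟩
        rw [this]
        apply ContinuousOn.preimage_isClosed_of_isClosed _ isClosed_Icc isClosed_Ici
        apply ContinuousOn.sub
        · exact (Real.continuous_exp.comp_continuousOn
            (continuousOn_const.mul hMcont)).sub continuousOn_const
        · exact continuousOn_const.mul hucont
      have h0S : (0:ℝ) ∈ S := by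
        refine ⟨⟨le_rfl, hT.le⟩, ?_⟩
        rw [hu0, hM0]
        simp
      have hgt : ∀ x ∈ S ∩ Ico (0:ℝ) T, ∀ y ∈ Ioi x, (S ∩ Ioc x y).Nonempty := by
        rintro x ⟨hxS, hxIco⟩ y hy
        have hxT : x < T := hxIco.2
        have hxy : x < min y T := lt_min hy hxT
        have hxIcc : x ∈ Icc (0:ℝ) T := ⟨hxIco.1, hxT.le⟩
        set c : ℝ := Real.log (1 + ε) / α with hcdef
        have hc : 0 < c := div_pos (Real.log_pos (by linarith)) hα
        -- find t' in Ioc x (min y T) with M t' < M x + c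
        have hcw : ContinuousWithinAt M (Icc 0 T) x := hMcont x hxIcc
        have hev1 : ∀ᶠ t' in 𝓝[Icc (0:ℝ) T] x, M t' < M x + c := by
          have : Iio (M x + c) ∈ 𝓝 (M x) := Iio_mem_nhds (by linarith)
          exact hcw this
        have hsub : Ioc x (min y T) ⊆ Icc (0:ℝ) T :=
          hIocsub x (min y T) hxIco.1 (min_le_right _ _)
        have hle : 𝓝[Ioc x (min y T)] x ≤ 𝓝[Icc (0:ℝ) T] x := nhdsWithin_mono x hsub
        have hne : (𝓝[Ioc x (min y T)] x).NeBot := by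
          rw [nhdsWithin_Ioc_eq_nhdsGT hxy]
          infer_instance
        have hev : ∀ᶠ t' in 𝓝[Ioc x (min y T)] x,
            M t' < M x + c ∧ t' ∈ Ioc x (min y T) :=
          (hev1.filter_mono hle).and self_mem_nhdsWithin
        obtain ⟨t', hMt', ht'mem⟩ := hev.exists
        have ht'Icc : t' ∈ Icc (0:ℝ) T := hsub ht'mem
        refine ⟨t', ?_, ht'mem.1, ht'mem.2.trans (min_le_left _ _)⟩
        refine ⟨ht'Icc, ?_⟩
        -- the core estimate
        have hxx' : x ≤ t' := ht'mem.1.le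
        have hMle : M x ≤ M t' := hMmono x hxIcc t' ht'Icc hxx'
        have hincr' := hincr x hxIcc t' ht'Icc hxx'
        have huadd' := huadd x hxIcc t' ht'Icc hxx'
        have hxineq : α * u x ≤ Real.exp (α * (1 + ε) * M x) - 1 := hxS.2
        set a : ℝ := α * M x with hadef
        set b : ℝ := α * M t' with hbdef
        have hab : a ≤ b := mul_le_mul_of_nonneg_left hMle hα.le
        have ha0 : 0 ≤ a := mul_nonneg hα.le (hMnonneg x)
        have hba : b ≤ a + Real.log (1 + ε) := by
          have hαc : α * c = Real.log (1 + ε) := by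
            rw [hcdef]; field_simp
          have h1 : α * M t' ≤ α * (M x + c) := mul_le_mul_of_nonneg_left hMt'.le hα.le
          rw [hbdef, hadef]
          nlinarith
        have hexpb : Real.exp b ≤ (1 + ε) * Real.exp a := by
          calc Real.exp b ≤ Real.exp (a + Real.log (1 + ε)) := Real.exp_le_exp.2 hba
            _ = (1 + ε) * Real.exp a := by
                rw [Real.exp_add, Real.exp_log (by linarith)]; ring
        -- exp((1+ε)b) - exp((1+ε)a) ≥ exp((1+ε)a) * (1+ε) * (b - a)
        have hconvex : Real.exp ((1 + ε) * a) * ((1 + ε) * b - (1 + ε) * a)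
            ≤ Real.exp ((1 + ε) * b) - Real.exp ((1 + ε) * a) := by
          have h := Real.add_one_le_exp ((1 + ε) * b - (1 + ε) * a)
          have hpos := Real.exp_pos ((1 + ε) * a)
          have h2 : Real.exp ((1 + ε) * a) * (((1 + ε) * b - (1 + ε) * a) + 1)
              ≤ Real.exp ((1 + ε) * a) * Real.exp ((1 + ε) * b - (1 + ε) * a) :=
            mul_le_mul_of_nonneg_left (by linarith) hpos.le
          rw [← Real.exp_add] at h2
          have h3 : (1 + ε) * a + ((1 + ε) * b - (1 + ε) * a) = (1 + ε) * b := by ring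
          rw [h3] at h2
          nlinarith [h2]
        have haa : Real.exp a ≤ Real.exp ((1 + ε) * a) :=
          Real.exp_le_exp.2 (by nlinarith)
        -- assemble
        have hstep : α * (∫ s in Ioc x t', g s) ≤ Real.exp b * (b - a) := by
          have : α * (∫ s in Ioc x t', g s) ≤ α * (Real.exp (α * M t') * (M t' - M x)) :=
            mul_le_mul_of_nonneg_left hincr' hα.le
          calc α * (∫ s in Ioc x t', g s)
              ≤ α * (Real.exp (α * M t') * (M t' - M x)) := this
            _ = Real.exp b * (b - a) := by rw [hbdef, hadef]; ring
        have hfinal : Real.exp b * (b - a) ≤ Real.exp ((1 + ε) * b) - Real.exp ((1 + ε) * a) := by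
          have h1 : Real.exp b * (b - a) ≤ (1 + ε) * Real.exp ((1 + ε) * a) * (b - a) := by
            apply mul_le_mul_of_nonneg_right _ (by linarith)
            calc Real.exp b ≤ (1 + ε) * Real.exp a := hexpb
              _ ≤ (1 + ε) * Real.exp ((1 + ε) * a) := by nlinarith
          nlinarith [hconvex]
        have : α * (1 + ε) * M x = (1 + ε) * a := by rw [hadef]; ring
        rw [huadd']
        calc α * (u x + ∫ s in Ioc x t', g s)
            = α * u x + α * (∫ s in Ioc x t', g s) := by ring
          _ ≤ (Real.exp (α * (1 + ε) * M x) - 1) + Real.exp b * (b - a) := by linarith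
          _ = (Real.exp ((1 + ε) * a) - 1) + Real.exp b * (b - a) := by rw [this]
          _ ≤ Real.exp ((1 + ε) * b) - 1 := by linarith
          _ = Real.exp (α * (1 + ε) * M t') - 1 := by rw [hbdef]; ring_nf
      have hsubset : Icc (0:ℝ) T ⊆ S := by
        apply hSclosed.Icc_subset_of_forall_exists_gt h0S hgt
      exact (hsubset ht).2
    -- take ε → 0
    have hlim : Tendsto (fun n : ℕ => Real.exp (α * (1 + 1 / (n + 1)) * M t) - 1)
        atTop (𝓝 (Real.exp (α * (1 + 0) * M t) - 1)) := by
      apply Tendsto.sub_const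
      apply (Real.continuous_exp.tendsto _).comp
      apply Tendsto.mul_const
      apply Tendsto.const_mul
      exact tendsto_const_nhds.add tendsto_one_div_add_atTop_nhds_zero_nat
    have : α * u t ≤ Real.exp (α * (1 + 0) * M t) - 1 := by
      apply ge_of_tendsto hlim
      filter_upwards with n
      exact hε (1 / (n + 1)) (by positivity)
    simpa using this
  -- main induction
  have hind : ∀ n, ∀ t ∈ Icc (0:ℝ) T, f n t ≤ (α + f0) * Real.exp (α * M t) := by
    intro n
    induction n with
    | zero =>
      intro t ht
      have h1 : (1:ℝ) ≤ Real.exp (α * M t) :=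
        Real.one_le_exp (mul_nonneg hα.le (hMnonneg t))
      nlinarith [hbase t ht]
    | succ n ih =>
      intro t ht
      have hInt1 : IntegrableOn (fun s => m s * f n s) (Ioc 0 t) :=
        (hmIoc 0 t le_rfl ht.2).mul_continuousOn_of_subset (hcont n) measurableSet_Ioc isCompact_Icc
          (hIocsub 0 t le_rfl ht.2)
      have hInt2 : IntegrableOn (fun s => m s * ((α + f0) * Real.exp (α * M s))) (Ioc 0 t) :=
        (hmIoc 0 t le_rfl ht.2).mul_continuousOn_of_subset (continuousOn_const.mul hexpcont) measurableSet_Ioc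
          isCompact_Icc (hIocsub 0 t le_rfl ht.2)
      have hmono : (∫ s in Ioc (0:ℝ) t, m s * f n s)
          ≤ ∫ s in Ioc (0:ℝ) t, m s * ((α + f0) * Real.exp (α * M s)) := by
        apply setIntegral_mono_on hInt1 hInt2 measurableSet_Ioc
        intro s hs
        have hsIcc : s ∈ Icc (0:ℝ) T := hIocsub 0 t le_rfl ht.2 hs
        exact mul_le_mul_of_nonneg_left (ih s hsIcc) (hm0 s)
      have heq : (∫ s in Ioc (0:ℝ) t, m s * ((α + f0) * Real.exp (α * M s)))
          = (α + f0) * u t := by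
        rw [hudef]
        simp only [hgdef]
        rw [← integral_const_mul]
        congr 1
        ext s
        ring
      have hkey' := hkey t ht
      have hrec' := hrec n t ht
      have hexp1 : (1:ℝ) ≤ Real.exp (α * M t) :=
        Real.one_le_exp (mul_nonneg hα.le (hMnonneg t))
      calc f (n + 1) t ≤ α * (1 + ∫ s in Ioc 0 t, m s * f n s) := hrec'
        _ ≤ α * (1 + (α + f0) * u t) := by
            have := hmono.trans_eq heq
            nlinarith
        _ ≤ (α + f0) * Real.exp (α * M t) := by nlinarith
  -- conclusion
  intro n t ht
  have h1 := hind n t ht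
  have h2 : M t ≤ M T := hMmono t ht T ⟨hT.le, le_rfl⟩ ht.2
  have h3 : (∫ s in Icc (0:ℝ) T, m s) = M T := integral_Icc_eq_integral_Ioc
  calc f n t ≤ (α + f0) * Real.exp (α * M t) := h1
    _ ≤ (α + f0) * Real.exp (α * ∫ s in Icc (0:ℝ) T, m s) := by
        rw [h3]
        apply mul_le_mul_of_nonneg_left _ (by linarith)
        exact Real.exp_le_exp.2 (mul_le_mul_of_nonneg_left h2 hα.le)
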